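/- arXiv:2106.06542 — 2 statements merged into one kernel-verified Lean document; each statement's English description precedes it below -/
import Mathlib

section
/- Let ρ be a formal power series over ℂ with constant coefficient 0 and nonzero linear coefficient, regarded as an element of the field of formal Laurent series ℂ((t)), where it is invertible (it has t-adic order 1). Then for every Laurent polynomial f ∈ ℂ[t, t^{-1}], the residue (the coefficient of t^{-1}) of the Laurent series f(ρ(t)) · ρ'(t) equals the residue of f, where f(ρ(t)) denotes the finite sum Σ_n a_n ρ(t)^n ∈ ℂ((t)) obtained by substituting ρ for t in f (negative powers computed in the field ℂ((t))). In particular, the residue map {\rm Res}_t : ℂ((t)) → ℂ is independent of the choice of formal coordinate. -/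
open PowerSeries

/-- The residue of a formal Laurent series: the coefficient of `t^{-1}`. -/
def laurentRes (g : LaurentSeries ℂ) : ℂ := g.coeff (-1)

private lemma dEq (f : PowerSeries ℂ) : d⁄dX ℂ f = derivativeFun f := rfl

/-- coefficient extraction as an additive hom -/
private def resHom : LaurentSeries ℂ →+ ℂ where
  toFun g := g.coeff (-1)
  map_zero' := rfl
  map_add' _ _ := HahnSeries.coeff_add

open HahnSeries in
private lemma res_zpow_mul_deriv (ρ : PowerSeries ℂ) (h0 : constantCoeff ρ = 0)
    (h1 : coeff 1 ρ ≠ 0) (n : ℤ) :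
    (((ρ : LaurentSeries ℂ) ^ n) *
      ((derivativeFun ρ : PowerSeries ℂ) : LaurentSeries ℂ)).coeff (-1)
      = if n = -1 then 1 else 0 := by
  obtain ⟨u, hu⟩ := PowerSeries.X_dvd_iff.mpr h0
  have hcu : constantCoeff u ≠ 0 := by
    have : coeff 1 ρ = constantCoeff u := by
      rw [hu, ← coeff_zero_eq_constantCoeff]
      exact coeff_succ_X_mul 0 u
    rwa [this] at h1
  set w : PowerSeries ℂ := u⁻¹ with hwdef
  have hw : u * w = 1 := PowerSeries.mul_inv_cancel u hcu
  have hρ' : derivativeFun ρ = u + X * derivativeFun u := by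
    rw [hu, derivativeFun_mul]
    have hX : derivativeFun (X : PowerSeries ℂ) = 1 := derivative_X
    rw [hX]
    simp [smul_eq_mul, add_comm, mul_comm]
  cases n with
  | ofNat k =>
    have : ((ρ : LaurentSeries ℂ) ^ (Int.ofNat k)) *
        ((derivativeFun ρ : PowerSeries ℂ) : LaurentSeries ℂ)
        = (((ρ ^ k * derivativeFun ρ : PowerSeries ℂ)) : LaurentSeries ℂ) := by
      rw [Int.ofNat_eq_coe, zpow_natCast, PowerSeries.coe_mul, PowerSeries.coe_pow]
    rw [this, PowerSeries.coeff_coe]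
    simp
  | negSucc k =>
    have hinv : ((ρ : LaurentSeries ℂ) ^ (Int.negSucc k))
        = single (Int.negSucc k) (1 : ℂ) * ((w ^ (k+1) : PowerSeries ℂ) : LaurentSeries ℂ) := by
      rw [zpow_negSucc]
      apply inv_eq_of_mul_eq_one_right
      rw [← PowerSeries.coe_pow, hu, mul_pow, PowerSeries.coe_mul]
      have hX : (((X : PowerSeries ℂ) ^ (k+1) : PowerSeries ℂ) : LaurentSeries ℂ)
          = single ((k+1 : ℕ) : ℤ) (1 : ℂ) := ofPowerSeries_X_pow (k+1)
      rw [hX]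
      calc single ((k+1 : ℕ) : ℤ) (1 : ℂ) * ((u ^ (k+1) : PowerSeries ℂ) : LaurentSeries ℂ) *
            (single (Int.negSucc k) (1 : ℂ) * ((w ^ (k+1) : PowerSeries ℂ) : LaurentSeries ℂ))
          = (single ((k+1 : ℕ) : ℤ) (1 : ℂ) * single (Int.negSucc k) (1 : ℂ)) *
            (((u ^ (k+1) * w ^ (k+1) : PowerSeries ℂ)) : LaurentSeries ℂ) := by
            rw [PowerSeries.coe_mul]; ring
        _ = 1 := by
            rw [single_mul_single, ← mul_pow, hw, one_pow]
            have h1 : ((k+1 : ℕ) : ℤ) + Int.negSucc k = 0 := by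
              rw [Int.negSucc_eq]; push_cast; ring
            rw [h1, mul_one, PowerSeries.coe_one, mul_one]
            exact HahnSeries.single_zero_one
    rw [hinv, mul_assoc, ← PowerSeries.coe_mul]
    have hm1 : (-1 : ℤ) = (k : ℤ) + Int.negSucc k := by
      rw [Int.negSucc_eq]; ring
    conv_lhs => rw [hm1]
    rw [coeff_single_mul_add, one_mul, PowerSeries.coeff_coe]
    rw [if_neg (by exact not_lt.mpr (Int.natCast_nonneg k))]
    have hna : (k : ℤ).natAbs = k := Int.natAbs_natCast k
    rw [hna]
    -- now a power series coefficient computation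
    have hsplit : w ^ (k+1) * derivativeFun ρ
        = w ^ k + X * (w ^ (k+1) * derivativeFun u) := by
      rw [hρ', mul_add]
      congr 1
      · rw [pow_succ, mul_assoc, mul_comm w u, hw, mul_one]
      · ring
    rw [hsplit]
    cases k with
    | zero =>
      have : Int.negSucc 0 = -1 := rfl
      rw [if_pos this]
      rw [map_add, coeff_zero_eq_constantCoeff]
      simp [constantCoeff_X]
    | succ j =>
      have hne : Int.negSucc (j+1) ≠ -1 := by simp [Int.negSucc_eq]; omega
      rw [if_neg hne, map_add, coeff_succ_X_mul]
      have hdw : derivativeFun w = -(w ^ 2 * derivativeFun u) := by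
        have := derivative_inv' (R := ℂ) u
        rw [dEq, dEq] at this
        rw [← hwdef] at this
        rw [this]; ring
      have hd : derivativeFun (w ^ (j+1))
          = -(C ((j : ℂ) + 1) * (w ^ (j+2) * derivativeFun u)) := by
        have hl := Derivation.leibniz_pow (PowerSeries.derivative ℂ) (a := w) (j+1)
        rw [dEq, dEq] at hl
        rw [hl, hdw]
        simp only [Nat.add_sub_cancel, smul_eq_mul, nsmul_eq_mul]
        rw [← map_natCast (C : ℂ →+* PowerSeries ℂ) (j+1)]
        have : ((j+1 : ℕ) : ℂ) = (j : ℂ) + 1 := by push_cast; ring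
        rw [this]
        ring
      have h2 := congrArg (PowerSeries.coeff j) hd
      rw [← dEq, coeff_derivative, map_neg, coeff_C_mul] at h2
      have hne2 : ((j : ℂ) + 1) ≠ 0 := Nat.cast_add_one_ne_zero j
      have h4 : ((j : ℂ) + 1) * (coeff (j+1) (w ^ (j+1))
          + coeff j (w ^ (j+1+1) * derivativeFun u)) = 0 := by
        have hpow : (j+1+1) = (j+2) := rfl
        rw [hpow]
        linear_combination h2
      exact (mul_eq_zero.mp h4).resolve_left hne2

/-- Coordinate independence of the residue: for a formal change of coordinate
`ρ` (constant term `0`, nonzero linear term) and any Laurent polynomial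
`f = ∑ₙ aₙ tⁿ` (encoded by its finitely supported coefficient function
`f : ℤ →₀ ℂ`), the residue of `f(ρ(t)) · ρ'(t)` equals the residue `a₋₁` of
`f`; here `f(ρ(t)) = ∑ₙ aₙ ρ(t)ⁿ` is computed in the field `ℂ((t))`, where
`ρ` is invertible since it has `t`-adic order `1`. -/
theorem residue_coordinate_independent (ρ : PowerSeries ℂ)
    (h0 : constantCoeff ρ = 0) (h1 : coeff 1 ρ ≠ 0) (f : ℤ →₀ ℂ) :
    laurentRes
      ((f.sum fun n a => a • ((ρ : LaurentSeries ℂ) ^ n)) *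
        ((derivativeFun ρ : PowerSeries ℂ) : LaurentSeries ℂ)) = f (-1) := by
  classical
  rw [Finsupp.sum_mul]
  unfold laurentRes
  have hres : ∀ g : LaurentSeries ℂ, g.coeff (-1) = resHom g := fun _ => rfl
  rw [hres, Finsupp.sum, map_sum]
  have hterm : ∀ n : ℤ, ∀ a : ℂ,
      resHom ((a • ((ρ : LaurentSeries ℂ) ^ n)) *
        ((derivativeFun ρ : PowerSeries ℂ) : LaurentSeries ℂ))
      = if n = -1 then a else 0 := by
    intro n a
    show ((a • ((ρ : LaurentSeries ℂ) ^ n)) *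
        ((derivativeFun ρ : PowerSeries ℂ) : LaurentSeries ℂ)).coeff (-1) = _
    have hsm : (a • ((ρ : LaurentSeries ℂ) ^ n)) *
        ((derivativeFun ρ : PowerSeries ℂ) : LaurentSeries ℂ)
        = a • (((ρ : LaurentSeries ℂ) ^ n) *
          ((derivativeFun ρ : PowerSeries ℂ) : LaurentSeries ℂ)) := by
      rw [← HahnSeries.single_zero_mul_eq_smul, ← HahnSeries.single_zero_mul_eq_smul, mul_assoc]
    rw [hsm, HahnSeries.coeff_smul, smul_eq_mul,
      res_zpow_mul_deriv ρ h0 h1 n]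
    split_ifs <;> simp
  calc (∑ n ∈ f.support, resHom ((f n • ((ρ : LaurentSeries ℂ) ^ n)) *
        ((derivativeFun ρ : PowerSeries ℂ) : LaurentSeries ℂ)))
      = ∑ n ∈ f.support, if n = -1 then f n else 0 := by
        exact Finset.sum_congr rfl fun n _ => hterm n (f n)
    _ = f (-1) := by
        rw [Finset.sum_ite_eq' f.support (-1) f]
        split_ifs with h
        · rfl
        · exact (Finsupp.notMem_support_iff.mp h).symm
end

section
/- Let V be a ℂ-vector space and φ : ℂ[t, t^{-1}] → End(V) a ℂ-linear map such that for every v ∈ V there exists L with φ(t^l) v = 0 for all l ≥ L. Let μ be a formal power series over ℂ with constant coefficient 0 and nonzero linear coefficient. Then for every Laurent polynomial f ∈ ℂ[t, t^{-1}] and every v ∈ V, the family of vectors c_n(μ, f) · φ(t^n) v indexed by n ∈ ℤ, where c_n(μ, f) := Res_t( μ(t)^{-n-1} · μ'(t) · f(μ(t)) ) (computed in the Laurent series field ℂ((t)), with μ(t)^{-n-1} the corresponding power of the unit μ(t)), has all but finitely many members equal to 0, and Σ_{n∈ℤ} c_n(μ, f) · φ(t^n) v = φ(f) v. In other words, the End(V)-valued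 differential ω = Σ_{n∈ℤ} φ(t^n) t^{-n-1} dt on the punctured disc is canonical: its pairing with any test function f is independent of the choice of formal coordinate μ. -/
open PowerSeries

/-- The coefficient `cₙ(μ, f) = Res_t(μ(t)^{-n-1} μ'(t) f(μ(t)))` expressing
the pairing of the canonical `End(V)`-valued differential with a test Laurent
polynomial `f = ∑ₘ aₘ tᵐ` in the coordinate `μ`; powers of the unit `μ(t)` are
computed in the field `ℂ((t))`. -/
noncomputable def omegaCoeff (μ : PowerSeries ℂ) (f : ℤ →₀ ℂ) (n : ℤ) : ℂ :=
  laurentRes (((μ : LaurentSeries ℂ) ^ (-n - 1)) *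
      ((derivativeFun μ : PowerSeries ℂ) : LaurentSeries ℂ) *
      (f.sum fun m a => a • ((μ : LaurentSeries ℂ) ^ m)))

namespace CanonicalDiffAux

open HahnSeries

lemma derivFun_pow (u : ℂ⟦X⟧) (j : ℕ) :
    derivativeFun (u ^ (j + 1)) = (j + 1 : ℕ) • (u ^ j * derivativeFun u) := by
  induction j with
  | zero => simp
  | succ i ih =>
    rw [pow_succ, derivativeFun_mul, ih]
    simp only [smul_eq_mul, nsmul_eq_mul, Nat.cast_add, Nat.cast_one, pow_succ]
    ring

lemma res_single_mul (a : ℤ) (g : ℂ⟦X⟧) :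
    (HahnSeries.single a (1 : ℂ) * (g : LaurentSeries ℂ)).coeff (-1)
      = if (-1 - a : ℤ) < 0 then 0 else coeff (-1 - a).natAbs g := by
  have h := HahnSeries.coeff_single_mul_add (r := (1 : ℂ))
    (x := (g : LaurentSeries ℂ)) (a := -1 - a) (b := a)
  rw [sub_add_cancel] at h
  rw [h, one_mul, PowerSeries.coeff_coe]

lemma uzpow_coe (U : (ℂ⟦X⟧)ˣ) (k : ℤ) :
    ((U : ℂ⟦X⟧) : LaurentSeries ℂ) ^ k = (((U ^ k : (ℂ⟦X⟧)ˣ) : ℂ⟦X⟧) : LaurentSeries ℂ) := by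
  set hom : ℂ⟦X⟧ →+* LaurentSeries ℂ := HahnSeries.ofPowerSeries ℤ ℂ
  have h1 : ((U : ℂ⟦X⟧) : LaurentSeries ℂ)
      = (Units.map (hom : ℂ⟦X⟧ →* LaurentSeries ℂ) U : LaurentSeries ℂ) := rfl
  rw [h1, ← Units.val_zpow_eq_zpow_val, ← map_zpow]
  rfl

/-- The key residue computation: `Res(μ^k μ') = δ_{k,-1}`. -/
lemma res_key (μ : ℂ⟦X⟧) (h0 : constantCoeff μ = 0) (h1 : coeff 1 μ ≠ 0) (k : ℤ) :
    laurentRes ((μ : LaurentSeries ℂ) ^ k *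
        ((derivativeFun μ : ℂ⟦X⟧) : LaurentSeries ℂ)) = if k = -1 then 1 else 0 := by
  obtain ⟨u, hu⟩ := PowerSeries.X_dvd_iff.mpr h0
  have hcu : constantCoeff u ≠ 0 := by
    have h : coeff 1 μ = coeff 0 u := by
      rw [hu]; exact coeff_succ_X_mul 0 u
    rw [h, coeff_zero_eq_constantCoeff] at h1
    exact h1
  obtain ⟨U, hU⟩ := PowerSeries.isUnit_iff_constantCoeff.mpr (isUnit_iff_ne_zero.mpr hcu)
  set W : ℤ → ℂ⟦X⟧ := fun m => ((U ^ m : (ℂ⟦X⟧)ˣ) : ℂ⟦X⟧) with hW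
  have hz : ∀ m : ℤ, ((u : ℂ⟦X⟧) : LaurentSeries ℂ) ^ m = ((W m : ℂ⟦X⟧) : LaurentSeries ℂ) := by
    intro m; rw [← hU]; exact uzpow_coe U m
  have hd : derivativeFun μ = u + X * derivativeFun u := by
    rw [hu, derivativeFun_mul]
    have hx : derivativeFun (X : ℂ⟦X⟧) = 1 := PowerSeries.derivative_X
    rw [hx]
    simp only [smul_eq_mul, mul_one]
    ring
  have hWu : (W k * u : ℂ⟦X⟧) = W (k + 1) := by
    have h2 : (U ^ (k + 1) : (ℂ⟦X⟧)ˣ) = U ^ k * U := zpow_add_one U k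
    calc W k * u = ((U ^ k * U : (ℂ⟦X⟧)ˣ) : ℂ⟦X⟧) := by rw [Units.val_mul, hU]
      _ = W (k + 1) := by rw [← h2]
  have expand : (μ : LaurentSeries ℂ) ^ k * ((derivativeFun μ : ℂ⟦X⟧) : LaurentSeries ℂ)
      = HahnSeries.single k 1 * ((W (k + 1) : ℂ⟦X⟧) : LaurentSeries ℂ)
        + HahnSeries.single (k + 1) 1 *
          ((W k * derivativeFun u : ℂ⟦X⟧) : LaurentSeries ℂ) := by
    have hμL : (μ : LaurentSeries ℂ)
        = HahnSeries.single 1 1 * ((u : ℂ⟦X⟧) : LaurentSeries ℂ) := by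
      rw [hu, PowerSeries.coe_mul, PowerSeries.coe_X]
    calc (μ : LaurentSeries ℂ) ^ k * ((derivativeFun μ : ℂ⟦X⟧) : LaurentSeries ℂ)
        = (HahnSeries.single k 1 * ((W k : ℂ⟦X⟧) : LaurentSeries ℂ)) *
            (((u : ℂ⟦X⟧) : LaurentSeries ℂ)
              + HahnSeries.single 1 1 * ((derivativeFun u : ℂ⟦X⟧) : LaurentSeries ℂ)) := by
          rw [hμL, mul_zpow, ← RatFunc.single_zpow, hz k, hd, PowerSeries.coe_add,
            PowerSeries.coe_mul, PowerSeries.coe_X]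
      _ = HahnSeries.single k 1 *
            (((W k : ℂ⟦X⟧) : LaurentSeries ℂ) * ((u : ℂ⟦X⟧) : LaurentSeries ℂ))
          + (HahnSeries.single k 1 * HahnSeries.single 1 1) *
            (((W k : ℂ⟦X⟧) : LaurentSeries ℂ) *
              ((derivativeFun u : ℂ⟦X⟧) : LaurentSeries ℂ)) := by ring
      _ = _ := by
          rw [← PowerSeries.coe_mul, ← PowerSeries.coe_mul, hWu,
            HahnSeries.single_mul_single, one_mul]
  unfold laurentRes
  rw [expand, HahnSeries.coeff_add, res_single_mul, res_single_mul]
  by_cases hk : k = -1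
  · subst hk
    norm_num
    simp [hW]
  · rcases lt_or_ge k (-1) with hneg | hpos
    · -- k ≤ -2
      have hk2 : k ≤ -2 := by omega
      set i : ℕ := (-2 - k).toNat with hi
      have hiz : (i : ℤ) = -2 - k := Int.toNat_of_nonneg (by omega)
      have hA1 : ¬ ((-1 - k : ℤ) < 0) := by omega
      have hA2 : ¬ ((-1 - (k + 1) : ℤ) < 0) := by omega
      rw [if_neg hA1, if_neg hA2, if_neg hk]
      have hnat1 : (-1 - k).natAbs = i + 1 := by omega
      have hnat2 : (-1 - (k + 1)).natAbs = i := by omega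
      rw [hnat1, hnat2]
      -- the relation u^(i+1) * W (k+1) = 1
      have hrelU : (U ^ ((i : ℤ) + 1) * U ^ (k + 1) : (ℂ⟦X⟧)ˣ) = 1 := by
        rw [← zpow_add]
        have : (i : ℤ) + 1 + (k + 1) = 0 := by omega
        rw [this, zpow_zero]
      have hrel : u ^ (i + 1) * W (k + 1) = 1 := by
        have hval := congrArg (Units.val) hrelU
        rw [Units.val_mul, Units.val_one] at hval
        have hp : ((U ^ ((i : ℤ) + 1) : (ℂ⟦X⟧)ˣ) : ℂ⟦X⟧) = u ^ (i + 1) := by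
          have : ((i : ℤ) + 1) = ((i + 1 : ℕ) : ℤ) := by push_cast; ring
          rw [this, zpow_natCast, Units.val_pow_eq_pow_val, hU]
        rw [hp] at hval
        exact hval
      have hdiff := congrArg derivativeFun hrel
      rw [derivativeFun_mul, derivativeFun_one, derivFun_pow] at hdiff
      set u_inv : ℂ⟦X⟧ := ((U⁻¹ : (ℂ⟦X⟧)ˣ) : ℂ⟦X⟧) with hu_inv
      have hui : u_inv * u = 1 := by rw [← hU]; exact U.inv_mul
      have hpow : u_inv ^ (i + 1) * u ^ (i + 1) = 1 := by
        rw [← mul_pow, hui, one_pow]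
      have hpow2 : u_inv ^ (i + 1) * u ^ i = u_inv := by
        rw [pow_succ, mul_right_comm, ← mul_pow, hui, one_pow, one_mul]
      have hWk : W k = W (k + 1) * u_inv := by
        have h2 : (U ^ k : (ℂ⟦X⟧)ˣ) = U ^ (k + 1) * U⁻¹ := by
          rw [← zpow_sub_one]; norm_num
        rw [hW]; simp only
        rw [h2, Units.val_mul]
      simp only [smul_eq_mul, nsmul_eq_mul] at hdiff
      have hW' : derivativeFun (W (k + 1))
          + ((i + 1 : ℕ) : ℂ⟦X⟧) * (W (k + 1) * (u_inv * derivativeFun u)) = 0 := by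
        linear_combination u_inv ^ (i + 1) * hdiff
          - derivativeFun (W (k + 1)) * hpow
          - (((i + 1 : ℕ) : ℂ⟦X⟧) * W (k + 1) * derivativeFun u) * hpow2
      have hco := congrArg (PowerSeries.coeff (R := ℂ) i) hW'
      rw [map_add, map_zero] at hco
      rw [show PowerSeries.coeff i (derivativeFun (W (k + 1))) = PowerSeries.coeff (i + 1) (W (k + 1)) * (i + 1) from
        coeff_derivative _ _] at hco
      have hcast : coeff i (((i + 1 : ℕ) : ℂ⟦X⟧) * (W (k + 1) * (u_inv * derivativeFun u)))
          = ((i : ℂ) + 1) * coeff i (W (k + 1) * (u_inv * derivativeFun u)) := by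
        rw [← nsmul_eq_mul, map_nsmul, nsmul_eq_mul]
        push_cast
        ring
      rw [hcast] at hco
      have hgoal2 : ((i : ℂ) + 1) *
          (coeff (i + 1) (W (k + 1)) + coeff i (W k * derivativeFun u)) = 0 := by
        have harr : W k * derivativeFun u = W (k + 1) * (u_inv * derivativeFun u) := by
          rw [hWk]; ring
        rw [harr]
        push_cast at hco ⊢
        linear_combination hco
      have hne : ((i : ℂ) + 1) ≠ 0 := by exact_mod_cast Nat.succ_ne_zero i
      have := mul_eq_zero.mp hgoal2
      tauto
    · -- k ≥ 0
      have hA1 : ((-1 - k : ℤ) < 0) := by omega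
      have hA2 : ((-1 - (k + 1) : ℤ) < 0) := by omega
      rw [if_pos hA1, if_pos hA2, if_neg hk, add_zero]

lemma coeff_sum {α : Type*} (s : Finset α) (F : α → LaurentSeries ℂ) (d : ℤ) :
    (∑ m ∈ s, F m).coeff d = ∑ m ∈ s, (F m).coeff d :=
  map_sum (HahnSeries.coeff.addMonoidHom d) F s

lemma omegaCoeff_eq (μ : ℂ⟦X⟧) (h0 : constantCoeff μ = 0) (h1 : coeff 1 μ ≠ 0)
    (f : ℤ →₀ ℂ) (n : ℤ) : omegaCoeff μ f n = f n := by
  have hμ0 : (μ : LaurentSeries ℂ) ≠ 0 := by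
    intro h
    apply h1
    have : μ = 0 := by
      apply HahnSeries.ofPowerSeries_injective (Γ := ℤ) (R := ℂ)
      rw [map_zero]; exact h
    rw [this, map_zero]
  unfold omegaCoeff laurentRes
  rw [Finsupp.sum, Finset.mul_sum, coeff_sum]
  have hterm : ∀ m ∈ f.support,
      ((μ : LaurentSeries ℂ) ^ (-n - 1) *
        ((derivativeFun μ : ℂ⟦X⟧) : LaurentSeries ℂ) *
        (f m • (μ : LaurentSeries ℂ) ^ m)).coeff (-1)
      = f m * (if m = n then 1 else 0) := by
    intro m _
    have harr : (μ : LaurentSeries ℂ) ^ (-n - 1) *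
        ((derivativeFun μ : ℂ⟦X⟧) : LaurentSeries ℂ) *
        (f m • (μ : LaurentSeries ℂ) ^ m)
        = f m • ((μ : LaurentSeries ℂ) ^ (m - n - 1) *
            ((derivativeFun μ : ℂ⟦X⟧) : LaurentSeries ℂ)) := by
      rw [← HahnSeries.C_mul_eq_smul, ← HahnSeries.C_mul_eq_smul]
      have hzp : (μ : LaurentSeries ℂ) ^ (-n - 1) * (μ : LaurentSeries ℂ) ^ m
          = (μ : LaurentSeries ℂ) ^ (m - n - 1) := by
        rw [← zpow_add₀ hμ0]
        congr 1
        ring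
      calc (μ : LaurentSeries ℂ) ^ (-n - 1) *
            ((derivativeFun μ : ℂ⟦X⟧) : LaurentSeries ℂ) *
            (HahnSeries.C (f m) * (μ : LaurentSeries ℂ) ^ m)
          = HahnSeries.C (f m) *
            (((μ : LaurentSeries ℂ) ^ (-n - 1) * (μ : LaurentSeries ℂ) ^ m) *
              ((derivativeFun μ : ℂ⟦X⟧) : LaurentSeries ℂ)) := by ring
        _ = HahnSeries.C (f m) * ((μ : LaurentSeries ℂ) ^ (m - n - 1) *
              ((derivativeFun μ : ℂ⟦X⟧) : LaurentSeries ℂ)) := by rw [hzp]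
    rw [harr, HahnSeries.coeff_smul, smul_eq_mul]
    have := res_key μ h0 h1 (m - n - 1)
    unfold laurentRes at this
    rw [this]
    congr 1
    by_cases hmn : m = n
    · rw [if_pos hmn, if_pos (by omega)]
    · rw [if_neg hmn, if_neg (by omega)]
  rw [Finset.sum_congr rfl hterm]
  simp only [mul_ite, mul_one, mul_zero]
  rw [Finset.sum_ite_eq' f.support n (fun m => f m)]
  by_cases hn : n ∈ f.support
  · rw [if_pos hn]
  · rw [if_neg hn, (Finsupp.notMem_support_iff.mp hn)]

end CanonicalDiffAux

/-- The `End(V)`-valued differential `ω = ∑ₙ φ(tⁿ) t^{-n-1} dt` on the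
punctured disc is canonical: for any formal coordinate `μ`, its pairing with a
Laurent polynomial `f` (encoded by `f : ℤ →₀ ℂ`, with `tⁿ = single n 1`) is a
finite sum and recovers `φ(f) v`, independently of the coordinate `μ`. -/
theorem canonical_differential (V : Type*) [AddCommGroup V] [Module ℂ V]
    (φ : (ℤ →₀ ℂ) →ₗ[ℂ] Module.End ℂ V)
    (hφ : ∀ v : V, ∃ L : ℤ, ∀ l : ℤ, L ≤ l → φ (Finsupp.single l 1) v = 0)
    (μ : PowerSeries ℂ) (h0 : constantCoeff μ = 0) (h1 : coeff 1 μ ≠ 0)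
    (f : ℤ →₀ ℂ) (v : V) :
    {n : ℤ | omegaCoeff μ f n • φ (Finsupp.single n 1) v ≠ 0}.Finite ∧
    ∑ᶠ n : ℤ, omegaCoeff μ f n • φ (Finsupp.single n 1) v = φ f v := by
  have hc : ∀ n, omegaCoeff μ f n = f n := CanonicalDiffAux.omegaCoeff_eq μ h0 h1 f
  have hsub : {n : ℤ | omegaCoeff μ f n • φ (Finsupp.single n 1) v ≠ 0}
      ⊆ (f.support : Set ℤ) := by
    intro n hn
    by_contra hns
    apply hn
    rw [hc, Finsupp.notMem_support_iff.mp (by simpa using hns), zero_smul]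
  constructor
  · exact Set.Finite.subset f.support.finite_toSet hsub
  · rw [finsum_eq_finset_sum_of_support_subset _ (by
      intro n hn
      exact hsub hn)]
    have hsum : ∑ n ∈ f.support, omegaCoeff μ f n • φ (Finsupp.single n 1) v
        = ∑ n ∈ f.support, f n • φ (Finsupp.single n 1) v := by
      apply Finset.sum_congr rfl
      intro n _
      rw [hc]
    rw [hsum]
    have hf : φ f = ∑ n ∈ f.support, f n • φ (Finsupp.single n 1) := by
      conv_lhs => rw [← Finsupp.sum_single f]
      rw [Finsupp.sum, map_sum]
      apply Finset.sum_congr rfl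
      intro n _
      rw [← map_smul, Finsupp.smul_single', mul_one]
    rw [hf, LinearMap.sum_apply]
    apply Finset.sum_congr rfl
    intro n _
    rw [LinearMap.smul_apply]
end
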